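/- arXiv:2602.11222 — 2 statements merged into one kernel-verified Lean document; each statement's English description precedes it below -/
import Mathlib

section
/- For every real number x with 0 ≤ x ≤ 2π, the Clausen function of order 2 satisfies ∑_{k=1}^∞ sin(kx)/k² = −∫_0^x log(2 sin(t/2)) dt, where the integral is a convergent improper (Lebesgue) integral. -/
open Real MeasureTheory intervalIntegral

lemma logInt01 : IntegrableOn Real.log (Set.Ioc (0:ℝ) 1) := by
  have h : IntegrableOn (fun t : ℝ => -Real.log t) (Set.Ioc (0:ℝ) 1) := by
    apply integrableOn_deriv_of_nonneg (g := fun t => t - t * Real.log t)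
    · exact (continuous_id.sub Real.continuous_mul_log).continuousOn
    · intro t ht
      have h1 : HasDerivAt (fun t : ℝ => t - t * Real.log t)
          (1 - (1 * Real.log t + t * t⁻¹)) t :=
        (hasDerivAt_id t).sub ((hasDerivAt_id t).mul (Real.hasDerivAt_log ht.1.ne'))
      rw [one_mul, mul_inv_cancel₀ ht.1.ne'] at h1
      convert h1 using 1
      ring
    · intro t ht
      simp only [neg_nonneg]
      exact Real.log_nonpos ht.1.le ht.2.le
  exact MeasureTheory.integrable_neg_iff.mp h

noncomputable def fK : ℝ → ℝ := fun t => Real.log (2 * Real.sin (t / 2))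

lemma fK_cont : Continuous (fun t : ℝ => 2 * Real.sin (t / 2)) := by continuity

lemma fK_meas : Measurable fK := Real.measurable_log.comp fK_cont.measurable

lemma logabs_ii : IntervalIntegrable (fun t : ℝ => 4 + |Real.log t|) volume 0 Real.pi := by
  have h01 : IntervalIntegrable Real.log volume 0 1 := by
    rw [intervalIntegrable_iff_integrableOn_Ioc_of_le (by norm_num)]
    exact logInt01
  have h1p : IntervalIntegrable Real.log volume 1 Real.pi := by
    apply intervalIntegrable_log
    intro h
    have hpi := Real.pi_pos
    rcases Set.mem_uIcc.mp h with ⟨h1, h2⟩ | ⟨h1, h2⟩ <;> linarith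
  exact (_root_.intervalIntegrable_const).add ((h01.trans h1p).abs)

lemma fK_ii_pi : IntervalIntegrable fK volume 0 Real.pi := by
  apply logabs_ii.mono_fun' (fK_meas.aestronglyMeasurable)
  have hpi := Real.pi_pos
  rw [Filter.EventuallyLE, ae_restrict_iff' measurableSet_uIoc]
  apply Filter.Eventually.of_forall
  intro t ht
  rw [Set.uIoc_of_le hpi.le] at ht
  obtain ⟨ht0, htp⟩ := ht
  have h2 : t / 2 ≤ Real.pi / 2 := by linarith
  have hs1 : Real.sin (t / 2) ≤ 1 := Real.sin_le_one _
  have hslb : t / Real.pi ≤ Real.sin (t / 2) := by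
    have := Real.mul_le_sin (x := t / 2) (by linarith) h2
    calc t / Real.pi = 2 / Real.pi * (t / 2) := by field_simp
    _ ≤ _ := this
  have hspos : 0 < Real.sin (t / 2) := lt_of_lt_of_le (by positivity) hslb
  have hub : fK t ≤ Real.log 2 := by
    have : (2:ℝ) * Real.sin (t / 2) ≤ 2 := by linarith
    simpa [fK] using Real.log_le_log (by positivity) this
  have hlb : Real.log 2 + Real.log t - Real.log Real.pi ≤ fK t := by
    have h1 : (2:ℝ) * (t / Real.pi) ≤ 2 * Real.sin (t / 2) := by linarith
    have h2' : Real.log (2 * (t / Real.pi)) ≤ fK t := Real.log_le_log (by positivity) h1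
    rw [Real.log_mul (by norm_num) (by positivity), Real.log_div ht0.ne' hpi.ne'] at h2'
    linarith
  have hlog2 : Real.log 2 ≤ 1 := by
    have := Real.log_le_sub_one_of_pos (x := 2) (by norm_num); linarith
  have hlog2' : (0:ℝ) ≤ Real.log 2 := Real.log_nonneg (by norm_num)
  have hlogpi : Real.log Real.pi ≤ 3 := by
    have := Real.log_le_sub_one_of_pos hpi
    have := Real.pi_le_four
    linarith
  have habs : -|Real.log t| ≤ Real.log t := neg_abs_le _
  rw [Real.norm_eq_abs, abs_le]
  constructor <;> [linarith; linarith]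

lemma fK_refl : ∀ t : ℝ, fK (2 * Real.pi - t) = fK t := by
  intro t
  have : (2 * Real.pi - t) / 2 = Real.pi - t / 2 := by ring
  simp [fK, this, Real.sin_pi_sub]

lemma fK_ii_2pi : IntervalIntegrable fK volume 0 (2 * Real.pi) := by
  have h := (fK_ii_pi.comp_sub_left (2 * Real.pi))
  simp only [sub_zero] at h
  have h2 : IntervalIntegrable fK volume (2 * Real.pi) (2 * Real.pi - Real.pi) := by
    have : (fun x => fK (2 * Real.pi - x)) = fK := funext fK_refl
    rwa [this] at h
  have h3 : (2 : ℝ) * Real.pi - Real.pi = Real.pi := by ring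
  rw [h3] at h2
  exact fK_ii_pi.trans h2.symm

noncomputable def PK (r t : ℝ) : ℝ := 1 - 2 * r * Real.cos t + r ^ 2

lemma normSq_one_sub (r t : ℝ) :
    Complex.normSq (1 - (r : ℂ) * Complex.exp (t * Complex.I)) = PK r t := by
  rw [Complex.exp_mul_I]
  simp [Complex.normSq_apply, PK, Complex.cos_ofReal_re, Complex.sin_ofReal_re]
  nlinarith [Real.sin_sq_add_cos_sq t]

lemma hasSum_A (r t : ℝ) (h0 : 0 ≤ r) (h1 : r < 1) :
    HasSum (fun n : ℕ => r ^ n * Real.cos (n * t) / n)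
      (-(1 / 2) * Real.log (PK r t)) := by
  set z : ℂ := (r : ℂ) * Complex.exp (t * Complex.I) with hz
  have hnz : ‖z‖ < 1 := by
    rw [hz, norm_mul, Complex.norm_exp_ofReal_mul_I, mul_one, Complex.norm_real,
      Real.norm_eq_abs, abs_of_nonneg h0]
    exact h1
  have h := Complex.hasSum_taylorSeries_neg_log hnz
  have hre := Complex.hasSum_re h
  have heq : ∀ n : ℕ, ((z ^ n / n : ℂ)).re = r ^ n * Real.cos (n * t) / n := by
    intro n
    rw [hz, mul_pow, ← Complex.exp_nat_mul]
    have : ((n : ℂ)) * (t * Complex.I) = ((n * t : ℝ) : ℂ) * Complex.I := by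
      push_cast; ring
    rw [this, show ((n:ℂ)) = ((n:ℝ):ℂ) by norm_cast, Complex.div_ofReal_re,
      ← Complex.ofReal_pow, Complex.re_ofReal_mul, Complex.exp_ofReal_mul_I_re]
  have hval : (-(Complex.log (1 - z))).re = -(1 / 2) * Real.log (PK r t) := by
    rw [Complex.neg_re, Complex.log_re, Complex.norm_def,
      Real.log_sqrt (Complex.normSq_nonneg _), normSq_one_sub]
    ring
  rw [← funext heq, ← hval]
  exact hre

lemma int_cos (n : ℕ) (x : ℝ) (hn : n ≠ 0) :
    ∫ t in (0:ℝ)..x, Real.cos (n * t) = Real.sin (n * x) / n := by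
  have hd : ∀ t ∈ Set.uIcc (0:ℝ) x,
      HasDerivAt (fun u => Real.sin (n * u) / n) (Real.cos (n * t)) t := by
    intro t _
    have h1 : HasDerivAt (fun u : ℝ => Real.sin (n * u)) (Real.cos (n * t) * n) t := by
      convert ((hasDerivAt_id t).const_mul (n : ℝ)).sin using 1 <;> simp
    have h2 := h1.div_const (n : ℝ)
    rwa [mul_div_assoc, div_self (Nat.cast_ne_zero.mpr hn), mul_one] at h2
  rw [intervalIntegral.integral_eq_sub_of_hasDerivAt hd
    ((Real.continuous_cos.comp (continuous_const.mul continuous_id)).intervalIntegrable 0 x)]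
  simp

lemma hasSum_B (r x : ℝ) (h0 : 0 ≤ r) (h1 : r < 1) (hx : 0 ≤ x) :
    HasSum (fun n : ℕ => r ^ n * Real.sin (n * x) / n ^ 2)
      (∫ t in Set.Ioc (0:ℝ) x, -(1 / 2) * Real.log (PK r t)) := by
  set μ := volume.restrict (Set.Ioc (0:ℝ) x) with hμ
  have hfin : IsFiniteMeasure μ := by
    constructor
    rw [hμ, Measure.restrict_apply_univ, Real.volume_Ioc]
    exact ENNReal.ofReal_lt_top
  set F : ℕ → ℝ → ℝ := fun n t => r ^ n * Real.cos (n * t) / n with hF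
  have hFcont : ∀ n, Continuous (F n) := fun n =>
    ((continuous_const.mul (Real.continuous_cos.comp
      (continuous_const.mul continuous_id))).div_const _)
  have hFbd : ∀ n t, ‖F n t‖ ≤ r ^ n := by
    intro n t
    rcases Nat.eq_zero_or_pos n with rfl | hn
    · simp [hF]
    · have h1 : |Real.cos (n * t)| ≤ 1 := Real.abs_cos_le_one _
      have hn1 : (1:ℝ) ≤ n := by exact_mod_cast hn
      rw [hF, Real.norm_eq_abs, abs_div, abs_mul, abs_pow, abs_of_nonneg h0, Nat.abs_cast]
      calc r ^ n * |Real.cos (n * t)| / n ≤ r ^ n * 1 / 1 := by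
            apply div_le_div₀ (by positivity) (by nlinarith [pow_nonneg h0 n]) one_pos hn1
      _ = r ^ n := by ring
  have hFint : ∀ n, Integrable (F n) μ := fun n =>
    (integrable_const (r ^ n)).mono' (hFcont n).aestronglyMeasurable
      (Filter.Eventually.of_forall (hFbd n))
  have hsum : Summable fun n => ∫ t, ‖F n t‖ ∂μ := by
    apply Summable.of_nonneg_of_le (fun n => integral_nonneg fun t => norm_nonneg _)
      (fun n => ?_) (((summable_geometric_of_lt_one h0 h1).mul_left
        ((μ Set.univ).toReal)))
    calc ∫ t, ‖F n t‖ ∂μ ≤ ∫ _t, r ^ n ∂μ :=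
          integral_mono ((hFint n).norm) (integrable_const _)
            (fun t => hFbd n t)
    _ = (μ Set.univ).toReal * r ^ n := by rw [MeasureTheory.integral_const]; simp [Measure.real]
  have h := hasSum_integral_of_summable_integral_norm hFint hsum
  have htsum : ∀ t : ℝ, ∑' n, F n t = -(1 / 2) * Real.log (PK r t) := fun t =>
    (hasSum_A r t h0 h1).tsum_eq
  have hint_eq : (∫ t, (∑' n, F n t) ∂μ) = ∫ t in Set.Ioc (0:ℝ) x, -(1 / 2) * Real.log (PK r t) := by
    rw [hμ]
    exact integral_congr_ae (Filter.Eventually.of_forall fun t => htsum t)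
  rw [hint_eq] at h
  have hterm : ∀ n : ℕ, (∫ t, F n t ∂μ) = r ^ n * Real.sin (n * x) / n ^ 2 := by
    intro n
    rcases Nat.eq_zero_or_pos n with rfl | hn
    · simp [hF]
    have hn0 : (n : ℝ) ≠ 0 := Nat.cast_ne_zero.mpr hn.ne'
    rw [hμ, ← intervalIntegral.integral_of_le hx]
    have : ∀ t : ℝ, F n t = (r ^ n / n) * Real.cos (n * t) := by
      intro t; rw [hF]; ring
    simp_rw [this]
    rw [intervalIntegral.integral_const_mul, int_cos n x hn.ne', div_mul_div_comm, ← pow_two]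
  simpa [funext hterm] using h

lemma summable_bound : Summable (fun n : ℕ => 1 / (n : ℝ) ^ 2) :=
  Real.summable_one_div_nat_pow.mpr one_lt_two

lemma hC1 (x : ℝ) :
    Filter.Tendsto (fun r : ℝ => ∑' n : ℕ, r ^ n * Real.sin (n * x) / n ^ 2)
      (nhdsWithin 1 (Set.Iio 1))
      (nhds (∑' n : ℕ, Real.sin (n * x) / n ^ 2)) := by
  apply tendsto_tsum_of_dominated_convergence (𝓕 := nhdsWithin (1:ℝ) (Set.Iio 1))
    (f := fun (r : ℝ) (n : ℕ) => r ^ n * Real.sin (n * x) / n ^ 2)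
    (g := fun (n : ℕ) => Real.sin (n * x) / n ^ 2)
    (bound := fun n : ℕ => 1 / (n : ℝ) ^ 2) summable_bound
  · intro n
    have hc : Continuous (fun r : ℝ => r ^ n * Real.sin (n * x) / n ^ 2) :=
      (continuous_pow n).mul continuous_const |>.div_const _
    have := (hc.tendsto 1).mono_left (nhdsWithin_le_nhds (s := Set.Iio (1:ℝ)))
    simpa using this
  · have hmem : Set.Ioo (0:ℝ) 1 ∈ nhdsWithin (1:ℝ) (Set.Iio 1) :=
      Ioo_mem_nhdsLT_of_mem (by constructor <;> norm_num)
    filter_upwards [hmem] with r hr n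
    rcases Nat.eq_zero_or_pos n with rfl | hn
    · simp
    have h1 : |Real.sin (n * x)| ≤ 1 := Real.abs_sin_le_one _
    have h2 : |r| ^ n ≤ 1 := pow_le_one₀ (abs_nonneg r)
      (by rw [abs_of_nonneg hr.1.le]; exact hr.2.le)
    have hnum : |r ^ n * Real.sin (n * x)| ≤ 1 := by
      rw [abs_mul, abs_pow]
      calc |r| ^ n * |Real.sin (n * x)| ≤ 1 * 1 := by
            exact mul_le_mul h2 h1 (abs_nonneg _) zero_le_one
      _ = 1 := one_mul 1
    have hn2 : (0:ℝ) < (n : ℝ) ^ 2 := by positivity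
    rw [Real.norm_eq_abs, abs_div, abs_of_nonneg hn2.le]
    gcongr

lemma PK_eq (r t : ℝ) : PK r t = (1 - r) ^ 2 + 4 * r * Real.sin (t / 2) ^ 2 := by
  have hcos : Real.cos t = Real.cos (t/2) ^ 2 - Real.sin (t/2) ^ 2 := by
    rw [← Real.cos_two_mul']
    ring_nf
  have hpyth := Real.sin_sq_add_cos_sq (t/2)
  simp only [PK]
  nlinarith

lemma bound_est (r t : ℝ) (hr : r ∈ Set.Ioo (1/2 : ℝ) 1) (ht : t ∈ Set.Ioo 0 (2 * Real.pi)) :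
    ‖-(1/2 : ℝ) * Real.log (PK r t)‖ ≤ |fK t| + 2 := by
  set s := Real.sin (t / 2) with hs
  have hspos : 0 < s := Real.sin_pos_of_pos_of_lt_pi (by linarith [ht.1]) (by linarith [ht.2])
  have hs1 : s ≤ 1 := Real.sin_le_one _
  have hPK := PK_eq r t
  have hlow : 2 * s ^ 2 ≤ PK r t := by nlinarith [sq_nonneg (1 - r), hr.1, hspos]
  have hpos : 0 < PK r t := by nlinarith
  have hup : PK r t ≤ 8 := by nlinarith [hr.1, hr.2, hspos]
  have hlogup : Real.log (PK r t) ≤ 3 := by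
    calc Real.log (PK r t) ≤ Real.log 8 := Real.log_le_log hpos hup
    _ = 3 * Real.log 2 := by
        rw [show (8:ℝ) = 2 ^ 3 by norm_num, Real.log_pow]; norm_num
    _ ≤ 3 := by nlinarith [Real.log_le_sub_one_of_pos (by norm_num : (0:ℝ) < 2)]
  have hfk : fK t = Real.log 2 + Real.log s :=
    Real.log_mul (by norm_num) hspos.ne'
  have hloglow : 2 * fK t - Real.log 2 ≤ Real.log (PK r t) := by
    have h1 : Real.log (2 * s ^ 2) ≤ Real.log (PK r t) :=
      Real.log_le_log (by positivity) hlow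
    rw [Real.log_mul (by norm_num) (by positivity), Real.log_pow] at h1
    push_cast at h1
    linarith [h1]
  have hlog2 : Real.log 2 ≤ 1 := by
    nlinarith [Real.log_le_sub_one_of_pos (by norm_num : (0:ℝ) < 2)]
  have hlog2' : (0:ℝ) ≤ Real.log 2 := Real.log_nonneg (by norm_num)
  have habs1 : -|fK t| ≤ fK t := neg_abs_le _
  have habs2 : fK t ≤ |fK t| := le_abs_self _
  rw [norm_mul, Real.norm_eq_abs, Real.norm_eq_abs, abs_neg]
  rw [abs_of_pos (by norm_num : (0:ℝ) < 1/2)]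
  rcases abs_cases (Real.log (PK r t)) with ⟨heq, _⟩ | ⟨heq, _⟩ <;> rw [heq] <;> linarith

lemma ptlim (t : ℝ) (ht : t ∈ Set.Ioo 0 (2 * Real.pi)) :
    Filter.Tendsto (fun r : ℝ => -(1/2 : ℝ) * Real.log (PK r t))
      (nhdsWithin 1 (Set.Iio 1)) (nhds (-fK t)) := by
  set s := Real.sin (t / 2) with hs
  have hspos : 0 < s := Real.sin_pos_of_pos_of_lt_pi (by linarith [ht.1]) (by linarith [ht.2])
  have hPK1 : PK 1 t = (2 * s) ^ 2 := by rw [PK_eq]; ring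
  have hPKpos : 0 < PK 1 t := by rw [hPK1]; positivity
  have hcontPK : Continuous (fun r : ℝ => PK r t) := by
    simp only [PK]; continuity
  have hct : ContinuousAt (fun r : ℝ => -(1/2 : ℝ) * Real.log (PK r t)) 1 := by
    apply ContinuousAt.mul continuousAt_const
    exact ContinuousAt.comp (x := (1:ℝ)) (Real.continuousAt_log hPKpos.ne') hcontPK.continuousAt
  have := hct.tendsto.mono_left (nhdsWithin_le_nhds (s := Set.Iio (1:ℝ)))
  have hval : -(1/2 : ℝ) * Real.log (PK 1 t) = -fK t := by
    rw [hPK1, Real.log_pow]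
    push_cast
    simp only [fK, ← hs]
    ring
  rwa [hval] at this

lemma hC2 (x : ℝ) (hx0 : 0 ≤ x) (hx1 : x ≤ 2 * Real.pi) :
    Filter.Tendsto (fun r : ℝ => ∫ t in Set.Ioc (0:ℝ) x, -(1/2 : ℝ) * Real.log (PK r t))
      (nhdsWithin 1 (Set.Iio 1))
      (nhds (∫ t in Set.Ioc (0:ℝ) x, -fK t)) := by
  have hKint : IntegrableOn fK (Set.Ioc (0:ℝ) x) := by
    have h := fK_ii_2pi.mono_set (c := 0) (d := x)
      (Set.uIcc_subset_uIcc (Set.mem_uIcc.mpr (Or.inl ⟨le_refl 0, by positivity⟩))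
        (Set.mem_uIcc.mpr (Or.inl ⟨hx0, hx1⟩)))
    rwa [intervalIntegrable_iff_integrableOn_Ioc_of_le hx0] at h
  have hae : ∀ᵐ t ∂(volume.restrict (Set.Ioc (0:ℝ) x)), t ∈ Set.Ioo 0 (2 * Real.pi) := by
    have h1 : ∀ᵐ t ∂(volume.restrict (Set.Ioc (0:ℝ) x)), t ∈ Set.Ioc (0:ℝ) x :=
      ae_restrict_mem measurableSet_Ioc
    have h2 : ∀ᵐ t : ℝ ∂volume, t ≠ 2 * Real.pi := by
      rw [Filter.eventually_iff, mem_ae_iff]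
      simp [show {t : ℝ | ¬ t ≠ 2 * Real.pi} = {2 * Real.pi} by ext t; simp]
    filter_upwards [h1, ae_restrict_of_ae h2] with t h3 h4
    exact ⟨h3.1, lt_of_le_of_ne (h3.2.trans hx1) h4⟩
  apply MeasureTheory.tendsto_integral_filter_of_dominated_convergence (bound := fun t => |fK t| + 2)
  · apply Filter.Eventually.of_forall
    intro r
    have : Continuous (fun t : ℝ => PK r t) := by simp only [PK]; continuity
    exact (measurable_const.mul (Real.measurable_log.comp this.measurable)).aestronglyMeasurable
  · have hmem : Set.Ioo (1/2 : ℝ) 1 ∈ nhdsWithin (1:ℝ) (Set.Iio 1) :=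
      Ioo_mem_nhdsLT_of_mem (by constructor <;> norm_num)
    filter_upwards [hmem] with r hr
    filter_upwards [hae] with t ht
    exact bound_est r t hr ht
  · exact hKint.abs.add (integrable_const 2)
  · filter_upwards [hae] with t ht
    exact ptlim t ht

/-- For every real `x` with `0 ≤ x ≤ 2π`, the kernel `log (2 sin (t/2))` is
(improperly Lebesgue-)integrable on `(0, x)` and the Clausen function of order 2
satisfies `∑_{k=1}^∞ sin(kx)/k² = -∫_0^x log (2 sin (t/2)) dt`. -/
theorem clausen_two_eq_neg_integral_log_two_sin_half
    (x : ℝ) (hx0 : 0 ≤ x) (hx1 : x ≤ 2 * Real.pi) :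
    IntervalIntegrable (fun t : ℝ => Real.log (2 * Real.sin (t / 2)))
        MeasureTheory.volume 0 x ∧
    HasSum (fun k : ℕ => Real.sin (((k : ℝ) + 1) * x) / ((k : ℝ) + 1) ^ 2)
      (-∫ t in (0 : ℝ)..x, Real.log (2 * Real.sin (t / 2))) := by
  have hii : IntervalIntegrable fK volume 0 x :=
    fK_ii_2pi.mono_set (Set.uIcc_subset_uIcc
      (Set.mem_uIcc.mpr (Or.inl ⟨le_refl 0, by positivity⟩))
      (Set.mem_uIcc.mpr (Or.inl ⟨hx0, hx1⟩)))
  refine ⟨hii, ?_⟩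
  have hsummable : Summable (fun n : ℕ => Real.sin (n * x) / (n : ℝ) ^ 2) := by
    apply Summable.of_norm_bounded summable_bound
    intro n
    rcases Nat.eq_zero_or_pos n with rfl | hn
    · simp
    have h1 : |Real.sin (n * x)| ≤ 1 := Real.abs_sin_le_one _
    have hn2 : (0:ℝ) < (n : ℝ) ^ 2 := by positivity
    rw [Real.norm_eq_abs, abs_div, abs_of_nonneg hn2.le]
    gcongr
  set S := ∑' n : ℕ, Real.sin (n * x) / (n : ℝ) ^ 2 with hS
  have hmem : Set.Ioo (0:ℝ) 1 ∈ nhdsWithin (1:ℝ) (Set.Iio 1) :=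
    Ioo_mem_nhdsLT_of_mem (by constructor <;> norm_num)
  have hGeq : (fun r : ℝ => ∑' n : ℕ, r ^ n * Real.sin (n * x) / n ^ 2) =ᶠ[nhdsWithin 1 (Set.Iio 1)]
      (fun r : ℝ => ∫ t in Set.Ioc (0:ℝ) x, -(1/2 : ℝ) * Real.log (PK r t)) := by
    filter_upwards [hmem] with r hr
    exact (hasSum_B r x hr.1.le hr.2 hx0).tsum_eq
  have hT : Filter.Tendsto (fun r : ℝ => ∫ t in Set.Ioc (0:ℝ) x, -(1/2 : ℝ) * Real.log (PK r t))
      (nhdsWithin 1 (Set.Iio 1)) (nhds S) := (hC1 x).congr' hGeq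
  have huniq : S = ∫ t in Set.Ioc (0:ℝ) x, -fK t := tendsto_nhds_unique hT (hC2 x hx0 hx1)
  have hval : S = -∫ t in (0:ℝ)..x, Real.log (2 * Real.sin (t / 2)) := by
    rw [huniq, MeasureTheory.integral_neg, intervalIntegral.integral_of_le hx0]
    rfl
  have hbase : HasSum (fun n : ℕ => Real.sin (n * x) / (n : ℝ) ^ 2) S := hsummable.hasSum
  have h1 : HasSum (fun k : ℕ => Real.sin ((k + 1 : ℕ) * x) / ((k + 1 : ℕ) : ℝ) ^ 2) S := by
    apply (hasSum_nat_add_iff (f := fun n : ℕ => Real.sin (n * x) / (n : ℝ) ^ 2) 1).mpr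
    simpa using hbase
  rw [hval] at h1
  convert h1 using 2 with k
  push_cast
  ring_nf
end

section
/- For every real number x with 0 < x < 2π, the function Cl₂(x) = ∑_{k=1}^∞ sin(kx)/k² is differentiable at x with derivative Cl₂′(x) = −log(2 sin(x/2)). -/
open Real Filter Finset Topology

namespace ClausenAux

noncomputable def S (n : ℕ) (y : ℝ) : ℝ :=
  ∑ i ∈ Finset.range n, Real.cos (((i : ℝ) + 1) * y) / ((i : ℝ) + 1)

noncomputable def G (n : ℕ) (y : ℝ) : ℝ :=
  ∑ i ∈ Finset.range n, Real.cos (((i : ℝ) + 1) * y)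

lemma cos_half_identity (y : ℝ) : Real.cos y = 1 - 2 * Real.sin (y / 2) ^ 2 := by
  have h := Real.sin_sq_add_cos_sq (y / 2)
  have h2 : Real.cos (2 * (y / 2)) = 2 * Real.cos (y / 2) ^ 2 - 1 := Real.cos_two_mul (y / 2)
  have h3 : (2 : ℝ) * (y / 2) = y := by ring
  rw [h3] at h2
  nlinarith

lemma abs_exp_sub_one (y : ℝ) :
    ‖Complex.exp (y * Complex.I) - 1‖ = 2 * |Real.sin (y / 2)| := by
  have hre : (Complex.exp (y * Complex.I) - 1).re = Real.cos y - 1 := by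
    simp [Complex.exp_ofReal_mul_I_re]
  have him : (Complex.exp (y * Complex.I) - 1).im = Real.sin y := by
    simp [Complex.exp_ofReal_mul_I_im]
  have habs2 : (‖Complex.exp (y * Complex.I) - 1‖) ^ 2 = 2 - 2 * Real.cos y := by
    rw [Complex.sq_norm, Complex.normSq_apply, hre, him]
    nlinarith [Real.sin_sq_add_cos_sq y]
  have h3 : (2 * |Real.sin (y / 2)|) ^ 2 = 2 - 2 * Real.cos y := by
    rw [mul_pow, sq_abs]
    nlinarith [cos_half_identity y]
  have h4 := congrArg Real.sqrt (habs2.trans h3.symm)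
  rwa [Real.sqrt_sq (norm_nonneg _), Real.sqrt_sq (by positivity)] at h4

lemma G_bound {y : ℝ} (hy : Real.sin (y / 2) ≠ 0) (n : ℕ) :
    |G n y| ≤ 1 / |Real.sin (y / 2)| := by
  set z : ℂ := Complex.exp (y * Complex.I) with hz
  have habs : ‖z - 1‖ = 2 * |Real.sin (y / 2)| := abs_exp_sub_one y
  have hz1 : z ≠ 1 := by
    intro h
    rw [h, sub_self, norm_zero] at habs
    have : |Real.sin (y / 2)| = 0 := by linarith
    exact hy (abs_eq_zero.mp this)
  have hzabs : ‖z‖ = 1 := Complex.norm_exp_ofReal_mul_I y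
  have hGre : G n y = (∑ i ∈ Finset.range n, z ^ (i + 1)).re := by
    rw [Complex.re_sum]
    refine Finset.sum_congr rfl fun i _ => ?_
    have : z ^ (i + 1) = Complex.exp ((((i : ℝ) + 1) * y : ℝ) * Complex.I) := by
      rw [hz, ← Complex.exp_nat_mul]
      ring_nf
      push_cast
      ring_nf
    rw [this, Complex.exp_ofReal_mul_I_re]
  have hgeom : ∑ i ∈ Finset.range n, z ^ (i + 1) = z * ((z ^ n - 1) / (z - 1)) := by
    rw [← geom_sum_eq hz1 n, Finset.mul_sum]
    exact Finset.sum_congr rfl fun i _ => by ring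
  have hb : ‖∑ i ∈ Finset.range n, z ^ (i + 1)‖ ≤ 1 / |Real.sin (y / 2)| := by
    rw [hgeom, norm_mul, hzabs, one_mul, norm_div, habs]
    have h1 : ‖z ^ n - 1‖ ≤ 2 := by
      calc ‖z ^ n - 1‖ ≤ ‖z ^ n‖ + ‖(1 : ℂ)‖ := by
            simpa [sub_eq_add_neg] using norm_add_le (z ^ n) (-1)
        _ = 2 := by rw [norm_pow, hzabs, one_pow, norm_one]; norm_num
    have hs : 0 < |Real.sin (y / 2)| := abs_pos.mpr hy
    rw [div_le_div_iff₀ (by linarith) hs]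
    calc ‖z ^ n - 1‖ * |Real.sin (y / 2)| ≤ 2 * |Real.sin (y / 2)| := by
          exact mul_le_mul_of_nonneg_right h1 (abs_nonneg _)
      _ ≤ 1 * (2 * |Real.sin (y / 2)|) := by linarith
  calc |G n y| = |(∑ i ∈ Finset.range n, z ^ (i + 1)).re| := by rw [hGre]
    _ ≤ ‖∑ i ∈ Finset.range n, z ^ (i + 1)‖ := Complex.abs_re_le_norm _
    _ ≤ 1 / |Real.sin (y / 2)| := hb

lemma S_tail {y B : ℝ} (hB : ∀ k, |G k y| ≤ B) {n m : ℕ} (hnm : n < m) :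
    |S m y - S n y| ≤ 2 * B / ((n : ℝ) + 1) := by
  have hB0 : 0 ≤ B := le_trans (abs_nonneg _) (hB 0)
  set a : ℕ → ℝ := fun i => ((i : ℝ) + 1)⁻¹ with ha
  set g : ℕ → ℝ := fun i => Real.cos (((i : ℝ) + 1) * y) with hg
  have hanti : ∀ i : ℕ, a (i + 1) ≤ a i := by
    intro i
    apply inv_anti₀ (by positivity)
    push_cast; linarith
  have hsplit : S m y - S n y = ∑ i ∈ Finset.Ico n m, a i • g i := by
    simp only [S, smul_eq_mul, ha, hg]
    rw [Finset.sum_Ico_eq_sub _ hnm.le]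
    congr 1 <;> exact Finset.sum_congr rfl fun i _ => by rw [div_eq_inv_mul]
  have hGg : ∀ k : ℕ, ∑ i ∈ Finset.range k, g i = G k y := fun k => rfl
  rw [hsplit, Finset.sum_Ico_by_parts a g hnm]
  simp only [smul_eq_mul, hGg]
  have htel : ∑ i ∈ Finset.Ico n (m - 1), (a i - a (i + 1)) = a n - a (m - 1) := by
    rw [Finset.sum_Ico_eq_sum_range]
    have h := Finset.sum_range_sub' (fun j => a (n + j)) (m - 1 - n)
    simp only [← Nat.add_assoc] at h
    rw [h]
    congr 2
    omega
  have hsum_bound : |∑ i ∈ Finset.Ico n (m - 1), (a (i + 1) - a i) * G (i + 1) y|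
      ≤ (a n - a (m - 1)) * B := by
    calc |∑ i ∈ Finset.Ico n (m - 1), (a (i + 1) - a i) * G (i + 1) y|
        ≤ ∑ i ∈ Finset.Ico n (m - 1), |(a (i + 1) - a i) * G (i + 1) y| :=
          Finset.abs_sum_le_sum_abs _ _
      _ ≤ ∑ i ∈ Finset.Ico n (m - 1), (a i - a (i + 1)) * B := by
          refine Finset.sum_le_sum fun i _ => ?_
          rw [abs_mul, abs_sub_comm, abs_of_nonneg (by linarith [hanti i])]
          exact mul_le_mul_of_nonneg_left (hB _) (by linarith [hanti i])
      _ = (a n - a (m - 1)) * B := by rw [← Finset.sum_mul, htel]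
  have hma : a (m - 1) ≤ a n := by
    apply inv_anti₀ (by positivity)
    push_cast
    have : n ≤ m - 1 := by omega
    exact_mod_cast by exact_mod_cast add_le_add_left (Nat.cast_le.mpr this) 1
  have h1 : |a (m - 1) * G m y| ≤ a (m - 1) * B := by
    rw [abs_mul, abs_of_nonneg (by positivity : (0:ℝ) ≤ a (m-1))]
    exact mul_le_mul_of_nonneg_left (hB _) (by positivity)
  have h2 : |a n * G n y| ≤ a n * B := by
    rw [abs_mul, abs_of_nonneg (by positivity : (0:ℝ) ≤ a n)]
    exact mul_le_mul_of_nonneg_left (hB _) (by positivity)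
  have htri : |a (m - 1) * G m y - a n * G n y -
      ∑ i ∈ Finset.Ico n (m - 1), (a (i + 1) - a i) * G (i + 1) y|
      ≤ |a (m - 1) * G m y| + |a n * G n y| +
        |∑ i ∈ Finset.Ico n (m - 1), (a (i + 1) - a i) * G (i + 1) y| := by
    rw [sub_eq_add_neg, sub_eq_add_neg]
    refine (abs_add_three _ _ _).trans ?_
    simp [abs_neg]
  refine htri.trans ?_
  have : a (m - 1) * B + a n * B + (a n - a (m - 1)) * B = 2 * B * a n := by ring
  calc |a (m - 1) * G m y| + |a n * G n y| +
        |∑ i ∈ Finset.Ico n (m - 1), (a (i + 1) - a i) * G (i + 1) y|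
      ≤ a (m - 1) * B + a n * B + (a n - a (m - 1)) * B :=
        add_le_add (add_le_add h1 h2) hsum_bound
    _ = 2 * B * a n := by ring
    _ = 2 * B / ((n : ℝ) + 1) := by rw [ha]; field_simp

lemma pointwise {y : ℝ} (hy0 : 0 < y) (hy1 : y < 2 * Real.pi) :
    Tendsto (fun n => S n y) atTop (𝓝 (-Real.log (2 * Real.sin (y / 2)))) := by
  have hpi := Real.pi_pos
  have hs : 0 < Real.sin (y / 2) :=
    Real.sin_pos_of_pos_of_lt_pi (by linarith) (by linarith)
  have hsne : Real.sin (y / 2) ≠ 0 := ne_of_gt hs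
  set B : ℝ := 1 / |Real.sin (y / 2)| with hBdef
  have hB : ∀ k, |G k y| ≤ B := G_bound hsne
  have hB0 : 0 ≤ B := by positivity
  -- Cauchy sequence
  have hcauchy : CauchySeq (fun n => S n y) := by
    rw [Metric.cauchySeq_iff']
    intro ε hε
    obtain ⟨N, hN⟩ := exists_nat_gt (2 * B / ε)
    refine ⟨N + 1, fun n hn => ?_⟩
    have hkey : 2 * B / ((N : ℝ) + 2) < ε := by
      rw [div_lt_iff₀ (by positivity)]
      have h1 : 2 * B < ε * N := by
        rw [div_lt_iff₀ hε] at hN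
        linarith
      nlinarith
    rcases eq_or_lt_of_le hn with h | h
    · rw [← h]
      simpa using hε
    · have := S_tail hB h
      rw [Real.dist_eq]
      push_cast at this ⊢
      calc |S n y - S (N + 1) y| ≤ 2 * B / ((N : ℝ) + 1 + 1) := this
        _ < ε := by convert hkey using 2; ring
  obtain ⟨l, hl⟩ := cauchySeq_tendsto_of_complete hcauchy
  set c : ℕ → ℝ := fun k => Real.cos ((k : ℝ) * y) / (k : ℝ) with hc
  have hpart : ∀ n, ∑ i ∈ Finset.range (n + 1), c i = S n y := by
    intro n
    rw [Finset.sum_range_succ']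
    simp only [hc, S, Nat.cast_zero, zero_mul, Real.cos_zero, div_zero, add_zero]
    push_cast
    rfl
  have hl' : Tendsto (fun n => ∑ i ∈ Finset.range n, c i) atTop (𝓝 l) := by
    rw [← tendsto_add_atTop_iff_nat 1]
    exact hl.congr fun n => (hpart n).symm
  have habel := Real.tendsto_tsum_powerSeries_nhdsWithin_lt hl'
  set z : ℂ := Complex.exp (y * Complex.I) with hz
  set L : ℂ := 1 - z with hL
  have hLre : 0 < L.re := by
    have : L.re = 1 - Real.cos y := by
      simp [hL, hz, Complex.sub_re, Complex.exp_ofReal_mul_I_re]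
    rw [this, cos_half_identity y]
    nlinarith [hs]
  -- the power series sums to the log for |r| < 1
  have hform : ∀ r : ℝ, |r| < 1 →
      ∑' n, c n * r ^ n = (-(Complex.log (1 - (r : ℂ) * z))).re := by
    intro r hr
    have hznorm : ‖(r : ℂ) * z‖ < 1 := by
      rw [norm_mul, hz,
        Complex.norm_exp_ofReal_mul_I, Complex.norm_real, mul_one]
      exact hr
    have hsum := Complex.hasSum_re (Complex.hasSum_taylorSeries_neg_log hznorm)
    have hterm : ∀ n : ℕ, ((((r : ℂ) * z) ^ n / (n : ℂ))).re = c n * r ^ n := by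
      intro n
      have h1 : ((r : ℂ) * z) ^ n / (n : ℂ)
          = ((r ^ n / (n : ℝ) : ℝ) : ℂ) * Complex.exp ((((n : ℝ) * y : ℝ)) * Complex.I) := by
        rw [mul_pow, hz, ← Complex.exp_nat_mul]
        push_cast
        ring
      rw [h1, Complex.re_ofReal_mul, Complex.exp_ofReal_mul_I_re, hc]
      ring
    rw [show (fun n : ℕ => c n * r ^ n) = fun n : ℕ => ((((r : ℂ) * z) ^ n / (n : ℂ))).re from
      funext fun n => (hterm n).symm]
    exact hsum.tsum_eq
  -- continuity of the limit function at 1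
  have hcont : Tendsto (fun r : ℝ => (-(Complex.log (1 - (r : ℂ) * z))).re) (𝓝[<] (1 : ℝ))
      (𝓝 ((-(Complex.log L)).re)) := by
    apply Tendsto.mono_left _ nhdsWithin_le_nhds
    have hc1 : ContinuousAt (fun r : ℝ => 1 - (r : ℂ) * z) 1 := by fun_prop
    have hf1 : (fun r : ℝ => 1 - (r : ℂ) * z) 1 ∈ Complex.slitPlane := by
      simp only [Complex.ofReal_one, one_mul]
      rw [← hL]
      exact Complex.mem_slitPlane_iff.mpr (Or.inl hLre)
    have hc3 : ContinuousAt (fun r : ℝ => Complex.log (1 - (r : ℂ) * z)) 1 := hc1.clog hf1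
    have := (Complex.continuous_re.continuousAt.comp hc3.neg).tendsto
    simpa [hL, Function.comp_def, Pi.neg_apply] using this
  -- identify the limits
  have heq : (fun r : ℝ => ∑' n, c n * r ^ n)
      =ᶠ[𝓝[<] (1 : ℝ)] fun r : ℝ => (-(Complex.log (1 - (r : ℂ) * z))).re := by
    have hmem : Set.Ioo (0 : ℝ) 1 ∈ 𝓝[<] (1 : ℝ) :=
      Ioo_mem_nhdsLT_of_mem ⟨zero_lt_one, le_rfl⟩
    filter_upwards [hmem] with r hr
    exact hform r (abs_lt.mpr ⟨by linarith [hr.1], hr.2⟩)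
  have hlim2 : Tendsto (fun r : ℝ => ∑' n, c n * r ^ n) (𝓝[<] (1 : ℝ))
      (𝓝 ((-(Complex.log L)).re)) := hcont.congr' heq.symm
  have hlval : l = (-(Complex.log L)).re := tendsto_nhds_unique habel hlim2
  -- compute the value
  have habsL : ‖L‖ = 2 * Real.sin (y / 2) := by
    have h1 : L = -(z - 1) := by rw [hL]; ring
    rw [h1, norm_neg, hz, abs_exp_sub_one,
      abs_of_pos hs]
  have : (-(Complex.log L)).re = -Real.log (2 * Real.sin (y / 2)) := by
    rw [Complex.neg_re, Complex.log_re, habsL]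
  rw [← this, ← hlval]
  exact hl

end ClausenAux

lemma summable_aux (y : ℝ) :
    Summable (fun k : ℕ => Real.sin (((k : ℝ) + 1) * y) / ((k : ℝ) + 1) ^ 2) := by
  have h0 : Summable (fun k : ℕ => 1 / ((k : ℝ) + 1) ^ 2) := by
    have h1 : Summable (fun k : ℕ => 1 / ((k : ℝ)) ^ 2) :=
      Real.summable_one_div_nat_pow.mpr one_lt_two
    have h2 := (summable_nat_add_iff 1).mpr h1
    refine h2.congr fun k => ?_
    push_cast
    ring
  refine Summable.of_norm_bounded h0 fun k => ?_
  rw [Real.norm_eq_abs, abs_div, abs_of_nonneg (by positivity : (0:ℝ) ≤ ((k:ℝ)+1)^2)]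
  apply div_le_div_of_nonneg_right ?_ (by positivity)
  · exact (abs_le.mpr ⟨neg_one_le_sin _, Real.sin_le_one _⟩ : |Real.sin (((k:ℝ)+1)*y)| ≤ 1)

open ClausenAux Filter Topology in
/-- For every real `x` with `0 < x < 2π`, the Clausen function
`Cl₂(x) = ∑_{k=1}^∞ sin(kx)/k²` is differentiable at `x` with derivative
`-log (2 sin (x/2))`. -/
theorem clausen_two_hasDerivAt
    (x : ℝ) (hx0 : 0 < x) (hx1 : x < 2 * Real.pi) :
    HasDerivAt
      (fun y : ℝ => ∑' k : ℕ, Real.sin (((k : ℝ) + 1) * y) / ((k : ℝ) + 1) ^ 2)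
      (-Real.log (2 * Real.sin (x / 2))) x := by
  have hpi := Real.pi_pos
  set s : Set ℝ := Set.Ioo (x / 2) (Real.pi + x / 2) with hsdef
  have hxs : x ∈ s := ⟨by linarith, by linarith⟩
  have hopen : IsOpen s := isOpen_Ioo
  have hsub : ∀ y ∈ s, 0 < y ∧ y < 2 * Real.pi := by
    intro y hy
    exact ⟨by linarith [hy.1], by linarith [hy.2]⟩
  set m0 : ℝ := min (Real.sin (x / 4)) (Real.sin (Real.pi / 2 + x / 4)) with hm0
  have hm0pos : 0 < m0 :=
    lt_min (Real.sin_pos_of_pos_of_lt_pi (by linarith) (by linarith))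
      (Real.sin_pos_of_pos_of_lt_pi (by linarith) (by linarith))
  have hsin_lb : ∀ y ∈ s, m0 ≤ Real.sin (y / 2) := by
    intro y hy
    have h1 : y / 2 ∈ segment ℝ (x / 4) (Real.pi / 2 + x / 4) := by
      rw [segment_eq_Icc (by linarith)]
      exact ⟨by linarith [hy.1], by linarith [hy.2]⟩
    exact strictConcaveOn_sin_Icc.concaveOn.ge_on_segment
      ⟨by linarith, by linarith⟩ ⟨by linarith, by linarith⟩ h1
  set B : ℝ := 1 / m0 with hBdef
  have hB0 : 0 ≤ B := by positivity
  have hGB : ∀ y ∈ s, ∀ n, |G n y| ≤ B := by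
    intro y hy n
    have hsy : 0 < Real.sin (y / 2) := lt_of_lt_of_le hm0pos (hsin_lb y hy)
    calc |G n y| ≤ 1 / |Real.sin (y / 2)| := G_bound (ne_of_gt hsy) n
      _ ≤ B := by
          rw [hBdef, abs_of_pos hsy]
          exact one_div_le_one_div_of_le hm0pos (hsin_lb y hy)
  -- uniform Cauchy
  have hUC : UniformCauchySeqOn (fun n y => S n y) atTop s := by
    rw [Metric.uniformCauchySeqOn_iff]
    intro ε hε
    obtain ⟨N, hN⟩ := exists_nat_gt (2 * B / ε)
    have key : ∀ y ∈ s, ∀ i j : ℕ, N + 1 ≤ i → i < j → |S j y - S i y| < ε := by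
      intro y hy i j hi hij
      have h1 := S_tail (hGB y hy) hij
      have h2 : 2 * B < ε * ((i : ℝ) + 1) := by
        rw [div_lt_iff₀ hε] at hN
        have : (N : ℝ) + 1 ≤ (i : ℝ) := by exact_mod_cast hi
        nlinarith
      calc |S j y - S i y| ≤ 2 * B / ((i : ℝ) + 1) := h1
        _ < ε := by rw [div_lt_iff₀ (by positivity)]; linarith
    refine ⟨N + 1, fun p hp q hq y hy => ?_⟩
    rcases lt_trichotomy p q with h | h | h
    · rw [dist_comm, Real.dist_eq]
      exact key y hy p q hp h
    · simp [h, hε]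
    · rw [Real.dist_eq]
      exact key y hy q p hq h
  have hTU : TendstoUniformlyOn (fun n y => S n y)
      (fun y => -Real.log (2 * Real.sin (y / 2))) atTop s :=
    hUC.tendstoUniformlyOn_of_tendsto fun y hy =>
      pointwise (hsub y hy).1 (hsub y hy).2
  -- derivatives of partial sums
  have hderiv : ∀ᶠ n in (atTop : Filter ℕ), ∀ y ∈ s,
      HasDerivAt (fun t => ∑ i ∈ Finset.range n,
        Real.sin (((i : ℝ) + 1) * t) / ((i : ℝ) + 1) ^ 2) (S n y) y := by
    refine Filter.Eventually.of_forall fun n y _ => ?_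
    have hterm : ∀ i ∈ Finset.range n,
        HasDerivAt (fun t => Real.sin (((i : ℝ) + 1) * t) / ((i : ℝ) + 1) ^ 2)
          (Real.cos (((i : ℝ) + 1) * y) / ((i : ℝ) + 1)) y := by
      intro i _
      have h1 : HasDerivAt (fun t : ℝ => ((i : ℝ) + 1) * t) ((i : ℝ) + 1) y := by
        simpa using (hasDerivAt_id y).const_mul ((i : ℝ) + 1)
      have h2 := h1.sin.div_const (((i : ℝ) + 1) ^ 2)
      have hi : ((i:ℝ) + 1) ≠ 0 := by positivity
      refine h2.congr_deriv ?_
      rw [div_eq_div_iff (pow_ne_zero 2 hi) hi]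
      ring
    exact HasDerivAt.fun_sum hterm
  have hfg : ∀ y ∈ s, Tendsto
      (fun n => ∑ i ∈ Finset.range n, Real.sin (((i : ℝ) + 1) * y) / ((i : ℝ) + 1) ^ 2)
      atTop (𝓝 (∑' k : ℕ, Real.sin (((k : ℝ) + 1) * y) / ((k : ℝ) + 1) ^ 2)) :=
    fun y _ => (summable_aux y).hasSum.tendsto_sum_nat
  exact hasDerivAt_of_tendstoUniformlyOn hopen hTU hderiv (fun y hy => hfg y hy) hxs
end
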